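/- For every natural number n, the number of 231-avoiding permutations of {1,…,n} equals the n-th Catalan number: the cardinality of the set of permutations σ of an n-element linearly ordered set such that there exist no indices i < j < k with σ(k) < σ(i) < σ(j) is C_n. -/

import Mathlib

set_option maxHeartbeats 1000000
def Av {n : ℕ} (σ : Equiv.Perm (Fin n)) : Prop :=
  ¬ ∃ i j k : Fin n, i < j ∧ j < k ∧ σ k < σ i ∧ σ i < σ j

def comp (n m : ℕ) (hm : m ≤ n) (τ : Equiv.Perm (Fin m)) (ρ : Equiv.Perm (Fin (n - m))) :
    Equiv.Perm (Fin (n + 1)) where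
  toFun i :=
    if h : (i : ℕ) < m then ⟨τ ⟨i, h⟩, by have := (τ ⟨i, h⟩).isLt; omega⟩
    else if h2 : (i : ℕ) = m then ⟨n, by omega⟩
    else ⟨m + ρ ⟨(i : ℕ) - m - 1, by have := i.isLt; omega⟩, by
      have := (ρ ⟨(i : ℕ) - m - 1, by have := i.isLt; omega⟩).isLt; omega⟩
  invFun v :=
    if h : (v : ℕ) < m then ⟨τ.symm ⟨v, h⟩, by have := (τ.symm ⟨v, h⟩).isLt; omega⟩
    else if h2 : (v : ℕ) = n then ⟨m, by omega⟩
    else ⟨m + 1 + ρ.symm ⟨(v : ℕ) - m, by have := v.isLt; omega⟩, by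
      have := (ρ.symm ⟨(v : ℕ) - m, by have := v.isLt; omega⟩).isLt; omega⟩
  left_inv := by
    intro i
    by_cases h : (i : ℕ) < m
    · have h1 : ((τ ⟨i, h⟩ : Fin m) : ℕ) < m := (τ ⟨i, h⟩).isLt
      simp only [dif_pos h, dif_pos h1]
      apply Fin.ext
      simp
    · by_cases h2 : (i : ℕ) = m
      · have hnm : ¬ (n < m) := by omega
        simp only [dif_neg h, dif_pos h2, dif_neg hnm, dif_pos rfl]
        apply Fin.ext
        simp [h2]
      · have hi := i.isLt
        set j : Fin (n - m) := ⟨(i : ℕ) - m - 1, by omega⟩ with hj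
        have hv := (ρ j).isLt
        have c1 : ¬ ((m + (ρ j : ℕ)) < m) := by omega
        have c2 : ¬ ((m + (ρ j : ℕ)) = n) := by omega
        simp only [dif_neg h, dif_neg h2, dif_neg c1, dif_neg c2]
        apply Fin.ext
        rw [dif_neg c1, dif_neg c2, Fin.val_mk]
        have : (⟨m + (ρ j : ℕ) - m, by omega⟩ : Fin (n - m)) = ρ j := by
          apply Fin.ext; simp
        rw [this, Equiv.symm_apply_apply]
        simp [hj]
        omega
  right_inv := by
    intro v
    by_cases h : (v : ℕ) < m
    · have h1 : ((τ.symm ⟨v, h⟩ : Fin m) : ℕ) < m := (τ.symm ⟨v, h⟩).isLt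
      simp only [dif_pos h, dif_pos h1]
      apply Fin.ext
      simp
    · by_cases h2 : (v : ℕ) = n
      · have hmm : ¬ (m < m) := by omega
        simp only [dif_neg h, dif_pos h2, dif_neg hmm, dif_pos rfl]
        apply Fin.ext
        simp [h2]
      · have hv := v.isLt
        set w : Fin (n - m) := ⟨(v : ℕ) - m, by omega⟩ with hw
        have hb := (ρ.symm w).isLt
        have c1 : ¬ ((m + 1 + (ρ.symm w : ℕ)) < m) := by omega
        have c2 : ¬ ((m + 1 + (ρ.symm w : ℕ)) = m) := by omega
        simp only [dif_neg h, dif_neg h2, dif_neg c1, dif_neg c2]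
        apply Fin.ext
        rw [dif_neg c1, dif_neg c2, Fin.val_mk]
        have : (⟨m + 1 + (ρ.symm w : ℕ) - m - 1, by omega⟩ : Fin (n - m)) = ρ.symm w := by
          apply Fin.ext; simp only []; omega
        rw [this, Equiv.apply_symm_apply]
        simp [hw]
        omega

variable {n m : ℕ} (hm : m ≤ n) (τ : Equiv.Perm (Fin m)) (ρ : Equiv.Perm (Fin (n - m)))

lemma comp_apply_lt (i : Fin (n + 1)) (h : (i : ℕ) < m) :
    ((comp n m hm τ ρ) i : ℕ) = τ ⟨i, h⟩ := by
  simp only [comp, Equiv.coe_fn_mk, dif_pos h]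

lemma comp_apply_eq (i : Fin (n + 1)) (h : (i : ℕ) = m) :
    ((comp n m hm τ ρ) i : ℕ) = n := by
  have h' : ¬ ((i : ℕ) < m) := by omega
  simp only [comp, Equiv.coe_fn_mk, dif_neg h', dif_pos h]

lemma comp_apply_gt (i : Fin (n + 1)) (h : m < (i : ℕ)) :
    ((comp n m hm τ ρ) i : ℕ) = m + ρ ⟨(i : ℕ) - m - 1, by have := i.isLt; omega⟩ := by
  have h' : ¬ ((i : ℕ) < m) := by omega
  have h2 : ¬ ((i : ℕ) = m) := by omega
  simp only [comp, Equiv.coe_fn_mk, dif_neg h', dif_neg h2]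

lemma comp_av (hτ : Av τ) (hρ : Av ρ) : Av (comp n m hm τ ρ) := by
  rintro ⟨i, j, k, hij, hjk, hki, hij2⟩
  rw [Fin.lt_def] at hij hjk hki hij2
  have hin := i.isLt; have hjn := j.isLt; have hkn := k.isLt
  rcases lt_trichotomy (k : ℕ) m with hk | hk | hk
  · -- all three in the left block
    have hi : (i : ℕ) < m := by omega
    have hj : (j : ℕ) < m := by omega
    rw [comp_apply_lt hm τ ρ i hi, comp_apply_lt hm τ ρ k hk] at hki
    rw [comp_apply_lt hm τ ρ i hi, comp_apply_lt hm τ ρ j hj] at hij2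
    exact hτ ⟨⟨i, hi⟩, ⟨j, hj⟩, ⟨k, hk⟩, Fin.mk_lt_mk.mpr hij,
      Fin.mk_lt_mk.mpr hjk, Fin.lt_def.mpr hki, Fin.lt_def.mpr hij2⟩
  · -- k at position m : σ k = n, impossible since σ k < σ i ≤ n
    rw [comp_apply_eq hm τ ρ k hk] at hki
    have := ((comp n m hm τ ρ) i).isLt; omega
  · rcases lt_trichotomy (i : ℕ) m with hi | hi | hi
    · -- i left, k right : σ i < m ≤ σ k contradicts σ k < σ i
      rw [comp_apply_lt hm τ ρ i hi] at hki
      rw [comp_apply_gt hm τ ρ k hk] at hki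
      have := (τ ⟨i, hi⟩).isLt; omega
    · -- i at position m : σ i = n, impossible since σ i < σ j
      rw [comp_apply_eq hm τ ρ i hi] at hij2
      have := ((comp n m hm τ ρ) j).isLt; omega
    · -- all three in the right block
      have hj : m < (j : ℕ) := by omega
      rw [comp_apply_gt hm τ ρ i hi, comp_apply_gt hm τ ρ k hk] at hki
      rw [comp_apply_gt hm τ ρ i hi, comp_apply_gt hm τ ρ j hj] at hij2
      refine hρ ⟨⟨(i : ℕ) - m - 1, by omega⟩, ⟨(j : ℕ) - m - 1, by omega⟩,
        ⟨(k : ℕ) - m - 1, by omega⟩, Fin.mk_lt_mk.mpr (by omega),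
        Fin.mk_lt_mk.mpr (by omega), ?_, ?_⟩ <;> rw [Fin.lt_def] <;> omega

section Key
variable {n : ℕ} (σ : Equiv.Perm (Fin (n + 1)))

lemma sigma_max : σ (σ.symm (Fin.last n)) = Fin.last n := σ.apply_symm_apply _

lemma key1 (hσ : Av σ) (i k : Fin (n + 1)) (hi : i < σ.symm (Fin.last n)) (hk : σ.symm (Fin.last n) < k) :
    (σ i : ℕ) < (σ k : ℕ) := by
  by_contra hcon
  have hik : (σ k : ℕ) < (σ i : ℕ) := by
    have h1 : σ i ≠ σ k := fun h => absurd (σ.injective h) (lt_trans hi hk).ne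
    have : (σ i : ℕ) ≠ (σ k : ℕ) := fun h => h1 (Fin.ext h)
    omega
  have hiM : (σ i : ℕ) < (σ (σ.symm (Fin.last n)) : ℕ) := by
    rw [sigma_max]
    have h1 : σ i ≠ Fin.last n := fun h => hi.ne (σ.injective (h.trans (sigma_max σ).symm))
    have h2 : (σ i : ℕ) ≠ n := fun h => h1 (Fin.ext (by simpa using h))
    have := (σ i).isLt
    simp only [Fin.val_last]
    omega
  exact hσ ⟨i, σ.symm (Fin.last n), k, hi, hk, Fin.lt_def.mpr hik, Fin.lt_def.mpr hiM⟩

lemma key2 (hσ : Av σ) (i : Fin (n + 1)) (hi : i < σ.symm (Fin.last n)) :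
    (σ i : ℕ) < (σ.symm (Fin.last n) : ℕ) := by
  set M := σ.symm (Fin.last n) with hM
  by_contra hcon
  push_neg at hcon
  have hMn := M.isLt
  have hne : σ i ≠ Fin.last n := fun h => hi.ne (σ.injective (h.trans (sigma_max σ).symm))
  have hne' : (σ i : ℕ) ≠ n := fun h => hne (Fin.ext (by simpa using h))
  have hsub : (Finset.Ioi M).image σ ⊆ Finset.Ioo (σ i) (Fin.last n) := by
    intro v hv
    simp only [Finset.mem_image, Finset.mem_Ioi] at hv
    obtain ⟨k, hk, rfl⟩ := hv
    rw [Finset.mem_Ioo]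
    refine ⟨Fin.lt_def.mpr (key1 σ hσ i k hi hk), ?_⟩
    refine lt_of_le_of_ne (Fin.le_last _) fun h => ?_
    exact absurd (σ.injective (h.trans (sigma_max σ).symm)) hk.ne'
  have hcard := Finset.card_le_card hsub
  rw [Finset.card_image_of_injective _ σ.injective, Fin.card_Ioi, Fin.card_Ioo] at hcard
  have := (σ i).isLt
  rw [Fin.val_last] at hcard
  omega

lemma key3 (hσ : Av σ) (k : Fin (n + 1)) (hk : σ.symm (Fin.last n) < k) :
    (σ.symm (Fin.last n) : ℕ) ≤ (σ k : ℕ) ∧ (σ k : ℕ) < n := by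
  set M := σ.symm (Fin.last n) with hM
  have h2 : σ k ≠ Fin.last n := fun h => hk.ne' (σ.injective (h.trans (sigma_max σ).symm))
  have h2' : (σ k : ℕ) < n := by
    have := (σ k).isLt
    have : (σ k : ℕ) ≠ n := fun h => h2 (Fin.ext (by simpa using h))
    omega
  refine ⟨?_, h2'⟩
  by_contra hcon
  push_neg at hcon
  have himg : (Finset.Iio M).image σ = Finset.Iio M := by
    apply Finset.eq_of_subset_of_card_le
    · intro v hv
      simp only [Finset.mem_image, Finset.mem_Iio] at hv ⊢
      obtain ⟨i, hi, rfl⟩ := hv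
      exact Fin.lt_def.mpr (key2 σ hσ i hi)
    · rw [Finset.card_image_of_injective _ σ.injective]
  have hmem : σ k ∈ Finset.Iio M := Finset.mem_Iio.mpr (Fin.lt_def.mpr hcon)
  rw [← himg] at hmem
  obtain ⟨i, hi, he⟩ := Finset.mem_image.mp hmem
  have hik := σ.injective he
  subst hik
  exact lt_asymm hk (Finset.mem_Iio.mp hi)

end Key

def AvSet (n : ℕ) := {σ : Equiv.Perm (Fin n) // Av σ}

def Phi (n : ℕ) (x : Σ m : Fin (n + 1), AvSet (m : ℕ) × AvSet (n - (m : ℕ))) : AvSet (n + 1) :=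
  ⟨comp n x.1 (Fin.is_le x.1) x.2.1.1 x.2.2.1,
    comp_av (Fin.is_le x.1) x.2.1.1 x.2.2.1 x.2.1.2 x.2.2.2⟩

lemma Phi_inj (n : ℕ) : Function.Injective (Phi n) := by
  rintro ⟨m, ⟨τ, hτ⟩, ⟨ρ, hρ⟩⟩ ⟨m', ⟨τ', hτ'⟩, ⟨ρ', hρ'⟩⟩ h
  have hc : comp n m (Fin.is_le m) τ ρ = comp n m' (Fin.is_le m') τ' ρ' :=
    congrArg Subtype.val h
  have hmm : m = m' := by
    have h1 : ((comp n m (Fin.is_le m) τ ρ) m : ℕ) = n := comp_apply_eq _ τ ρ m rfl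
    have h2 : ((comp n m' (Fin.is_le m') τ' ρ') m' : ℕ) = n := comp_apply_eq _ τ' ρ' m' rfl
    rw [hc] at h1
    exact (comp n m' (Fin.is_le m') τ' ρ').injective (Fin.ext (h1.trans h2.symm))
  subst hmm
  have hτe : τ = τ' := by
    apply Equiv.ext
    intro i
    have hiv : (i : ℕ) < (m : ℕ) := i.isLt
    have hb : (i : ℕ) < n + 1 := by have := Fin.is_le m; omega
    have e1 := comp_apply_lt (Fin.is_le m) τ ρ ⟨(i : ℕ), hb⟩ hiv
    have e2 := comp_apply_lt (Fin.is_le m) τ' ρ' ⟨(i : ℕ), hb⟩ hiv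
    rw [hc] at e1
    exact Fin.ext (e1.symm.trans e2)
  subst hτe
  have hρe : ρ = ρ' := by
    apply Equiv.ext
    intro j
    have hjv := j.isLt
    have hmn := Fin.is_le m
    have hb : (m : ℕ) + 1 + (j : ℕ) < n + 1 := by omega
    have hgt : (m : ℕ) < (((⟨(m : ℕ) + 1 + (j : ℕ), hb⟩ : Fin (n + 1))) : ℕ) := by
      simp only []; omega
    have e1 := comp_apply_gt (Fin.is_le m) τ ρ ⟨(m : ℕ) + 1 + (j : ℕ), hb⟩ hgt
    have e2 := comp_apply_gt (Fin.is_le m) τ ρ' ⟨(m : ℕ) + 1 + (j : ℕ), hb⟩ hgt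
    rw [hc] at e1
    have harr : (m : ℕ) + 1 + (j : ℕ) - (m : ℕ) - 1 = (j : ℕ) := by omega
    simp only [Fin.val_mk, harr, Fin.eta] at e1 e2
    have := e1.symm.trans e2
    exact Fin.ext (by omega)
  subst hρe
  rfl

lemma Phi_surj (n : ℕ) : Function.Surjective (Phi n) := by
  rintro ⟨σ, hσ⟩
  have hMle : (σ.symm (Fin.last n) : ℕ) ≤ n := Fin.is_le _
  set M := σ.symm (Fin.last n) with hMdef
  -- left part
  have hidx1 : ∀ i : Fin (M : ℕ), (i : ℕ) < n + 1 := fun i => by have := i.isLt; omega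
  have hlt1 : ∀ i : Fin (M : ℕ), (⟨(i : ℕ), hidx1 i⟩ : Fin (n + 1)) < M :=
    fun i => Fin.lt_def.mpr i.isLt
  have hτb : ∀ i : Fin (M : ℕ), (σ ⟨(i : ℕ), hidx1 i⟩ : ℕ) < (M : ℕ) :=
    fun i => key2 σ hσ _ (hlt1 i)
  have tf_inj : Function.Injective (fun i : Fin (M : ℕ) =>
      (⟨(σ ⟨(i : ℕ), hidx1 i⟩ : ℕ), hτb i⟩ : Fin (M : ℕ))) := by
    intro a b hab
    simp only [Fin.mk.injEq] at hab
    have := σ.injective (Fin.ext hab)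
    simpa [Fin.mk.injEq, Fin.ext_iff] using this
  let τ : Equiv.Perm (Fin (M : ℕ)) :=
    Equiv.ofBijective _ (Finite.injective_iff_bijective.mp tf_inj)
  have hτ_apply : ∀ i : Fin (M : ℕ), (τ i : ℕ) = (σ ⟨(i : ℕ), hidx1 i⟩ : ℕ) := fun i => rfl
  -- right part
  have hidx2 : ∀ j : Fin (n - (M : ℕ)), (M : ℕ) + 1 + (j : ℕ) < n + 1 :=
    fun j => by have := j.isLt; omega
  have hlt2 : ∀ j : Fin (n - (M : ℕ)), M < (⟨(M : ℕ) + 1 + (j : ℕ), hidx2 j⟩ : Fin (n + 1)) :=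
    fun j => Fin.lt_def.mpr (by simp only []; omega)
  have hρb : ∀ j : Fin (n - (M : ℕ)),
      (M : ℕ) ≤ (σ ⟨(M : ℕ) + 1 + (j : ℕ), hidx2 j⟩ : ℕ) ∧
      (σ ⟨(M : ℕ) + 1 + (j : ℕ), hidx2 j⟩ : ℕ) < n :=
    fun j => key3 σ hσ _ (hlt2 j)
  have rf_inj : Function.Injective (fun j : Fin (n - (M : ℕ)) =>
      (⟨(σ ⟨(M : ℕ) + 1 + (j : ℕ), hidx2 j⟩ : ℕ) - (M : ℕ),
        by have := hρb j; omega⟩ : Fin (n - (M : ℕ)))) := by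
    intro a b hab
    simp only [Fin.mk.injEq] at hab
    have ha := hρb a; have hb := hρb b
    have : σ ⟨(M : ℕ) + 1 + (a : ℕ), hidx2 a⟩ = σ ⟨(M : ℕ) + 1 + (b : ℕ), hidx2 b⟩ :=
      Fin.ext (by omega)
    have := σ.injective this
    simp only [Fin.mk.injEq] at this
    exact Fin.ext (by omega)
  let ρ : Equiv.Perm (Fin (n - (M : ℕ))) :=
    Equiv.ofBijective _ (Finite.injective_iff_bijective.mp rf_inj)
  have hρ_apply : ∀ j : Fin (n - (M : ℕ)),
      (ρ j : ℕ) = (σ ⟨(M : ℕ) + 1 + (j : ℕ), hidx2 j⟩ : ℕ) - (M : ℕ) := fun j => rfl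
  -- avoidance of τ
  have hAvτ : Av τ := by
    rintro ⟨i, j, k, hij, hjk, h1, h2⟩
    rw [Fin.lt_def] at hij hjk h1 h2
    rw [hτ_apply, hτ_apply] at h1 h2
    exact hσ ⟨⟨(i : ℕ), hidx1 i⟩, ⟨(j : ℕ), hidx1 j⟩, ⟨(k : ℕ), hidx1 k⟩,
      Fin.lt_def.mpr hij, Fin.lt_def.mpr hjk, Fin.lt_def.mpr h1, Fin.lt_def.mpr h2⟩
  -- avoidance of ρ
  have hAvρ : Av ρ := by
    rintro ⟨i, j, k, hij, hjk, h1, h2⟩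
    rw [Fin.lt_def] at hij hjk h1 h2
    rw [hρ_apply, hρ_apply] at h1 h2
    have hi := hρb i; have hj := hρb j; have hk := hρb k
    exact hσ ⟨⟨(M : ℕ) + 1 + (i : ℕ), hidx2 i⟩, ⟨(M : ℕ) + 1 + (j : ℕ), hidx2 j⟩,
      ⟨(M : ℕ) + 1 + (k : ℕ), hidx2 k⟩, Fin.mk_lt_mk.mpr (by omega),
      Fin.mk_lt_mk.mpr (by omega), Fin.lt_def.mpr (by omega), Fin.lt_def.mpr (by omega)⟩
  refine ⟨⟨M, ⟨τ, hAvτ⟩, ⟨ρ, hAvρ⟩⟩, ?_⟩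
  apply Subtype.ext
  apply Equiv.ext
  intro i
  apply Fin.ext
  show ((comp n M (Fin.is_le M) τ ρ) i : ℕ) = (σ i : ℕ)
  rcases lt_trichotomy (i : ℕ) (M : ℕ) with hc | hc | hc
  · rw [comp_apply_lt (Fin.is_le M) τ ρ i hc, hτ_apply]
  · rw [comp_apply_eq (Fin.is_le M) τ ρ i hc]
    have : i = M := Fin.ext hc
    rw [this, hMdef, sigma_max, Fin.val_last]
  · have hin := i.isLt
    rw [comp_apply_gt (Fin.is_le M) τ ρ i hc, hρ_apply]
    have harr : (M : ℕ) + 1 + ((i : ℕ) - (M : ℕ) - 1) = (i : ℕ) := by omega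
    have hkey := hρb ⟨(i : ℕ) - (M : ℕ) - 1, by omega⟩
    have hieq : (⟨(M : ℕ) + 1 + ((i : ℕ) - (M : ℕ) - 1),
        hidx2 ⟨(i : ℕ) - (M : ℕ) - 1, by omega⟩⟩ : Fin (n + 1)) = i := Fin.ext harr
    rw [hieq] at hkey ⊢
    omega

noncomputable def avCount (n : ℕ) : ℕ := Nat.card (AvSet n)

lemma avCount_zero : avCount 0 = 1 := by
  have e : AvSet 0 ≃ Equiv.Perm (Fin 0) :=
    Equiv.subtypeUnivEquiv (fun σ => by rintro ⟨i, -⟩; exact i.elim0)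
  rw [avCount, Nat.card_congr e]
  simp [Nat.card_eq_fintype_card]

lemma avCount_succ (n : ℕ) :
    avCount (n + 1) = ∑ m : Fin (n + 1), avCount m * avCount (n - (m : ℕ)) := by
  classical
  haveI inst : ∀ k : ℕ, Fintype (AvSet k) := fun k => by
    unfold AvSet; exact Fintype.ofFinite _
  have hcard := Nat.card_eq_of_bijective (Phi n) ⟨Phi_inj n, Phi_surj n⟩
  rw [avCount, ← hcard, Nat.card_eq_fintype_card, Fintype.card_sigma]
  refine Finset.sum_congr rfl fun m _ => ?_
  rw [Fintype.card_prod, avCount, avCount, Nat.card_eq_fintype_card, Nat.card_eq_fintype_card]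

lemma avCount_eq_catalan (n : ℕ) : avCount n = catalan n := by
  induction n using Nat.strong_induction_on with
  | _ n ih =>
    rcases n with - | n
    · rw [avCount_zero, catalan_zero]
    · rw [avCount_succ, catalan_succ]
      refine Finset.sum_congr rfl fun m _ => ?_
      rw [ih m (by have := m.isLt; omega), ih (n - (m : ℕ)) (by omega)]

/-- The number of 231-avoiding permutations of an `n`-element linearly ordered set equals
the `n`-th Catalan number. -/
theorem card_avoiding231_eq_catalan (n : ℕ) :
    Nat.card {σ : Equiv.Perm (Fin n) //
      ¬ ∃ i j k : Fin n, i < j ∧ j < k ∧ σ k < σ i ∧ σ i < σ j} = catalan n := by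
  exact avCount_eq_catalan n
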